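/- Let n ≥ 2 and let d : {1,…,n} → ℝ satisfy d(1) = 1 and 0 ≤ d(i) < 1 for every i ≠ 1. Let Ω := {z ∈ ℂⁿ | Im(z_n) > 0}, let F : Ω → ℂ be holomorphic, and write E := Σ_{α=1}^n d(α)·z_α·∂_α for the weighted Euler operator. Suppose E F = 2F on Ω and E(∂_ε∂_μ F) = 0 on Ω for all pairs of indices ε, μ. Then there exists a constant c ∈ ℂ such that F(z) = c·z₁² for all z ∈ Ω. -/

import Mathlib

open Set Metric Complex MeasureTheory Filter Real Topology


/-- The partial derivative `∂_α f` of a function `f : ℂⁿ → ℂ` in the direction of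
the `α`-th coordinate. -/
noncomputable def pd {n : ℕ} (α : Fin n) (f : (Fin n → ℂ) → ℂ) :
    (Fin n → ℂ) → ℂ :=
  fun z => fderiv ℂ f z (Pi.single α 1)

/-- The weighted Euler operator `E f = Σ_α d(α)·z_α·∂_α f`. -/
noncomputable def eulerOp {n : ℕ} (d : Fin n → ℝ) (f : (Fin n → ℂ) → ℂ) :
    (Fin n → ℂ) → ℂ :=
  fun z => ∑ α : Fin n, (d α : ℂ) * z α * pd α f z


section AuxiliaryLemmas

variable {n : ℕ}

lemma slice_hasDerivAt {f : (Fin n → ℂ) → ℂ} {z : Fin n → ℂ} (hz : DifferentiableAt ℂ f z)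
    (v : Fin n → ℂ) :
    HasDerivAt (fun t : ℂ => f (z + t • v)) (fderiv ℂ f z v) 0 := by
  have h1 : HasDerivAt (fun t : ℂ => z + t • v) v 0 := by
    simpa using ((hasDerivAt_id (0:ℂ)).smul_const v).const_add z
  have h0 : HasFDerivAt f (fderiv ℂ f z) (z + (0:ℂ) • v) := by simpa using hz.hasFDerivAt
  exact h0.comp_hasDerivAt (x := 0) h1

lemma norm_fderiv_le_aux {f : (Fin n → ℂ) → ℂ} {z₀ : Fin n → ℂ} {r M : ℝ} (hr : 0 < r)
    (hd : ∀ z ∈ closedBall z₀ (3*r), DifferentiableAt ℂ f z)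
    (hM : ∀ z ∈ closedBall z₀ (3*r), ‖f z‖ ≤ M)
    {z : Fin n → ℂ} (hz : z ∈ closedBall z₀ (2*r)) :
    ‖fderiv ℂ f z‖ ≤ M / r := by
  have hz3 : z ∈ closedBall z₀ (3*r) := by
    apply closedBall_subset_closedBall (by linarith) hz
  have hM0 : 0 ≤ M := le_trans (norm_nonneg _)
    (hM z₀ (by simp [mem_closedBall]; positivity))
  refine ContinuousLinearMap.opNorm_le_bound _ (div_nonneg hM0 hr.le) (fun v => ?_)
  rcases eq_or_ne v 0 with rfl | hv
  · simp
  · have hvn : 0 < ‖v‖ := norm_pos_iff.2 hv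
    set ρ : ℝ := r / ‖v‖ with hρdef
    have hρ0 : 0 < ρ := div_pos hr hvn
    have hmem : ∀ t : ℂ, ‖t‖ ≤ ρ → z + t • v ∈ closedBall z₀ (3*r) := by
      intro t ht
      simp only [mem_closedBall, dist_eq_norm] at hz ⊢
      have heq : z + t • v - z₀ = (z - z₀) + t • v := by ring
      rw [heq]
      have h2 : ‖t • v‖ ≤ r := by
        rw [norm_smul]
        calc ‖t‖ * ‖v‖ ≤ ρ * ‖v‖ := by gcongr
          _ = r := div_mul_cancel₀ r hvn.ne'
      calc ‖(z - z₀) + t • v‖ ≤ ‖z - z₀‖ + ‖t • v‖ := norm_add_le _ _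
        _ ≤ 2*r + r := by linarith
        _ = 3*r := by ring
    have hgd : DifferentiableOn ℂ (fun t : ℂ => f (z + t • v)) (closedBall 0 ρ) := by
      intro t ht
      simp only [mem_closedBall, dist_zero_right] at ht
      exact ((hd _ (hmem t ht)).comp t
        ((differentiableAt_id.smul_const v).const_add z)).differentiableWithinAt
    have hder : HasDerivAt (fun t : ℂ => f (z + t • v)) (fderiv ℂ f z v) 0 :=
      slice_hasDerivAt (hd z hz3) v
    have hbd := Complex.norm_deriv_le_of_forall_mem_sphere_norm_le hρ0
      ((hgd.mono closure_ball_subset_closedBall).diffContOnCl)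
      (fun t ht => hM _ (hmem t (by simpa [mem_sphere_iff_norm] using ht.le)))
    rw [hder.deriv] at hbd
    calc ‖fderiv ℂ f z v‖ ≤ M / ρ := hbd
      _ = M / r * ‖v‖ := by rw [hρdef]; field_simp

/-- Key lemma: the partial derivative of a holomorphic function on an open subset of `ℂⁿ`
is differentiable. -/
lemma differentiableAt_pd {U : Set (Fin n → ℂ)} (hU : IsOpen U) {f : (Fin n → ℂ) → ℂ}
    (hf : DifferentiableOn ℂ f U) (μ : Fin n) {z₀ : Fin n → ℂ} (hz₀ : z₀ ∈ U) :
    DifferentiableAt ℂ (pd μ f) z₀ := by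
  obtain ⟨ε, hε, hεU⟩ := Metric.isOpen_iff.1 hU z₀ hz₀
  set r : ℝ := ε / 4 with hrdef
  have hr : 0 < r := by positivity
  have hball : closedBall z₀ (3*r) ⊆ U := by
    refine Subset.trans ?_ hεU
    intro z hz
    simp only [mem_closedBall, mem_ball] at hz ⊢
    rw [hrdef] at hz; linarith
  have hd : ∀ z ∈ closedBall z₀ (3*r), DifferentiableAt ℂ f z := fun z hz =>
    hf.differentiableAt (hU.mem_nhds (hball hz))
  obtain ⟨M, hM⟩ := (isCompact_closedBall z₀ (3*r)).exists_bound_of_continuousOn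
    (hf.continuousOn.mono hball)
  have hM0 : 0 ≤ M := le_trans (norm_nonneg _)
    (hM z₀ (by simp [mem_closedBall]; positivity))
  set e : Fin n → ℂ := Pi.single μ 1 with he
  have hnorme : ‖e‖ = 1 := by rw [he, Pi.norm_single]; simp
  set c : ℝ → ℂ := fun θ => circleMap 0 r θ with hc
  have hcnorm : ∀ θ, ‖c θ‖ = r := by
    intro θ; simp [hc, norm_circleMap_zero, abs_of_pos hr]
  have hcne : ∀ θ, c θ ≠ 0 := fun θ => by
    intro h; have := hcnorm θ; rw [h] at this; simp at this; linarith
  set K : ℝ → ℂ := fun θ => (2 * π * I)⁻¹ * ((c θ) ^ (-2 : ℤ) * (c θ * I)) with hK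
  set ν : Measure ℝ := volume.restrict (Ioc (0:ℝ) (2*π)) with hν
  -- membership
  have hmem2 : ∀ x ∈ ball z₀ r, ∀ θ : ℝ, x + c θ • e ∈ closedBall z₀ (2*r) := by
    intro x hx θ
    simp only [mem_ball, dist_eq_norm] at hx
    simp only [mem_closedBall, dist_eq_norm]
    have heq : x + c θ • e - z₀ = (x - z₀) + c θ • e := by ring
    rw [heq]
    have h2 : ‖c θ • e‖ = r := by rw [norm_smul, hcnorm, hnorme, mul_one]
    calc ‖(x - z₀) + c θ • e‖ ≤ ‖x - z₀‖ + ‖c θ • e‖ := norm_add_le _ _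
      _ ≤ r + r := by rw [h2]; linarith
      _ = 2*r := by ring
  have hKcont : Continuous K := by
    apply continuous_const.mul
    apply Continuous.mul
    · exact (continuous_circleMap 0 r).zpow₀ (-2) (fun θ => Or.inl (hcne θ))
    · exact (continuous_circleMap 0 r).mul continuous_const
  have hcont : ∀ x ∈ ball z₀ r, Continuous (fun θ : ℝ => f (x + c θ • e)) := by
    intro x hx
    rw [continuous_iff_continuousAt]
    intro θ
    have h1 : ContinuousAt f (x + c θ • e) :=
      (hd _ (closedBall_subset_closedBall (by linarith) (hmem2 x hx θ))).continuousAt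
    have h2 : Continuous (fun θ : ℝ => x + c θ • e) :=
      continuous_const.add ((continuous_circleMap 0 r).smul continuous_const)
    exact ContinuousAt.comp (g := f) (f := fun θ : ℝ => x + c θ • e) h1 h2.continuousAt
  -- (B) representation
  have hrep : ∀ x ∈ ball z₀ r, pd μ f x = ∫ θ, K θ * f (x + c θ • e) ∂ν := by
    intro x hx
    have hxd : DifferentiableAt ℂ f x :=
      hd x (closedBall_subset_closedBall (by linarith : r ≤ 3*r) (ball_subset_closedBall hx))
    have hgd : DifferentiableOn ℂ (fun t : ℂ => f (x + t • e)) (closedBall 0 r) := by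
      intro t ht
      simp only [mem_closedBall, dist_zero_right] at ht
      have hmem : x + t • e ∈ closedBall z₀ (2*r) := by
        simp only [mem_ball, dist_eq_norm] at hx
        simp only [mem_closedBall, dist_eq_norm]
        have heq : x + t • e - z₀ = (x - z₀) + t • e := by ring
        rw [heq]
        calc ‖(x - z₀) + t • e‖ ≤ ‖x - z₀‖ + ‖t • e‖ := norm_add_le _ _
          _ ≤ r + r := by
              rw [norm_smul, hnorme, mul_one]
              linarith
          _ = 2*r := by ring
      exact ((hd _ (closedBall_subset_closedBall (by linarith) hmem)).comp t
        ((differentiableAt_id.smul_const e).const_add x)).differentiableWithinAt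
    have hder : HasDerivAt (fun t : ℂ => f (x + t • e)) (pd μ f x) 0 :=
      slice_hasDerivAt hxd e
    have hcauchy : deriv (fun t : ℂ => f (x + t • e)) 0 = (2 * π * I)⁻¹ •
        circleIntegral (fun z => (z - 0) ^ (-2 : ℤ) • f (x + z • e)) 0 r := by
      have h := DiffContOnCl.deriv_eq_smul_circleIntegral hr
        ((hgd.mono closure_ball_subset_closedBall).diffContOnCl)
      have h2 : circleIntegral (fun z => (z - 0) ^ (-2 : ℤ) • f (x + z • e)) 0 r
          = circleIntegral (fun z => (1 / (z - 0) ^ 2) • f (x + z • e)) 0 r := by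
        congr 1; ext z; simp [zpow_neg]
      rw [h2, h, smul_smul, inv_mul_cancel₀ (by simp [pi_ne_zero, I_ne_zero]), one_smul]
    rw [hder.deriv] at hcauchy
    rw [hcauchy, circleIntegral, ← intervalIntegral.integral_smul,
      intervalIntegral.integral_of_le (by positivity : (0:ℝ) ≤ 2*π)]
    refine integral_congr_ae (Filter.Eventually.of_forall (fun θ => ?_))
    simp only [deriv_circleMap, smul_eq_mul, sub_zero, hK]
    ring
  -- (A) differentiability of the parametric integral
  have hdiff : DifferentiableAt ℂ (fun x => ∫ θ, K θ * f (x + c θ • e) ∂ν) z₀ := by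
    have key := hasFDerivAt_integral_of_dominated_loc_of_lip'
      (F := fun x θ => K θ * f (x + c θ • e))
      (F' := fun θ => K θ • fderiv ℂ f (z₀ + c θ • e))
      (bound := fun θ => ‖K θ‖ * (M / r))
      (μ := ν) (x₀ := z₀) (ball_mem_nhds z₀ hr)
      ?_ ?_ ?_ ?_ ?_ ?_
    · exact key.2.differentiableAt
    · intro x hx
      exact ((hKcont.mul (hcont x hx)).aestronglyMeasurable)
    · exact ((hKcont.mul (hcont z₀ (mem_ball_self hr))).integrableOn_Ioc)
    · have hmc : Measurable (fun θ : ℝ => fderiv ℂ f (z₀ + c θ • e)) :=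
        (measurable_fderiv ℂ f).comp (Continuous.measurable
          (continuous_const.add ((continuous_circleMap 0 r).smul continuous_const)))
      exact ((hKcont.stronglyMeasurable).smul hmc.stronglyMeasurable).aestronglyMeasurable
    · refine Filter.Eventually.of_forall (fun θ => fun x hx => ?_)
      have ha : x + c θ • e ∈ closedBall z₀ (2*r) := hmem2 x hx θ
      have hb : z₀ + c θ • e ∈ closedBall z₀ (2*r) := hmem2 z₀ (mem_ball_self hr) θ
      have hlip := (convex_closedBall z₀ (2*r)).norm_image_sub_le_of_norm_fderiv_le
        (fun y hy => hd y (closedBall_subset_closedBall (by linarith) hy))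
        (fun y hy => norm_fderiv_le_aux hr hd hM hy) hb ha
      have heq : (x + c θ • e) - (z₀ + c θ • e) = x - z₀ := by ring
      rw [heq] at hlip
      calc ‖K θ * f (x + c θ • e) - K θ * f (z₀ + c θ • e)‖
          = ‖K θ‖ * ‖f (x + c θ • e) - f (z₀ + c θ • e)‖ := by
            rw [← norm_mul, mul_sub]
        _ ≤ ‖K θ‖ * (M / r * ‖x - z₀‖) := by
            apply mul_le_mul_of_nonneg_left hlip (norm_nonneg _)
        _ = ‖K θ‖ * (M / r) * ‖x - z₀‖ := by ring
    · exact ((hKcont.norm.mul continuous_const).integrableOn_Ioc)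
    · refine Filter.Eventually.of_forall (fun θ => ?_)
      have hb : z₀ + c θ • e ∈ closedBall z₀ (3*r) :=
        closedBall_subset_closedBall (by linarith) (hmem2 z₀ (mem_ball_self hr) θ)
      have h1 : HasFDerivAt f (fderiv ℂ f (z₀ + c θ • e)) (z₀ + c θ • e) :=
        (hd _ hb).hasFDerivAt
      have h2 : HasFDerivAt (fun x : Fin n → ℂ => x + c θ • e)
          (ContinuousLinearMap.id ℂ (Fin n → ℂ)) z₀ :=
        (hasFDerivAt_id z₀).add_const _
      have h3 := h1.comp z₀ h2
      rw [ContinuousLinearMap.comp_id] at h3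
      exact h3.const_mul (K θ)
  exact hdiff.congr_of_eventuallyEq
    (Filter.eventuallyEq_of_mem (isOpen_ball.mem_nhds (mem_ball_self hr)) hrep)

lemma differentiableOn_pd {U : Set (Fin n → ℂ)} (hU : IsOpen U) {f : (Fin n → ℂ) → ℂ}
    (hf : DifferentiableOn ℂ f U) (μ : Fin n) :
    DifferentiableOn ℂ (pd μ f) U :=
  fun z hz => (differentiableAt_pd hU hf μ hz).differentiableWithinAt

lemma fderiv_apply_eq_sum {f : (Fin n → ℂ) → ℂ} {z : Fin n → ℂ} (v : Fin n → ℂ) :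
    fderiv ℂ f z v = ∑ α, v α * pd α f z := by
  have hv : v = ∑ α, v α • (Pi.single α 1 : Fin n → ℂ) := by
    rw [← Finset.univ_sum_single v]
    refine Finset.sum_congr rfl (fun α _ => ?_)
    rw [← Pi.single_smul, smul_eq_mul, mul_one]
    simp [Finset.univ_sum_single]
  conv_lhs => rw [hv]
  rw [map_sum]
  refine Finset.sum_congr rfl (fun α _ => ?_)
  rw [_root_.map_smul, smul_eq_mul]
  rfl

/-- The derivative map `z ↦ fderiv ℂ f z` is differentiable at points of `U`. -/
lemma differentiableAt_fderiv {U : Set (Fin n → ℂ)} (hU : IsOpen U) {f : (Fin n → ℂ) → ℂ}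
    (hf : DifferentiableOn ℂ f U) {z₀ : Fin n → ℂ} (hz₀ : z₀ ∈ U) :
    DifferentiableAt ℂ (fun z => fderiv ℂ f z) z₀ := by
  have h1 : DifferentiableAt ℂ
      (fun z => ∑ α, pd α f z • (ContinuousLinearMap.proj α :
        (Fin n → ℂ) →L[ℂ] ℂ)) z₀ := by
    apply DifferentiableAt.fun_sum
    intro α _
    exact (differentiableAt_pd hU hf α hz₀).smul_const _
  refine h1.congr_of_eventuallyEq ?_
  refine Filter.eventuallyEq_of_mem (hU.mem_nhds hz₀) (fun z hz => ?_)
  ext v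
  simp only [ContinuousLinearMap.sum_apply, ContinuousLinearMap.smul_apply,
    ContinuousLinearMap.proj_apply, smul_eq_mul]
  rw [fderiv_apply_eq_sum]
  refine Finset.sum_congr rfl (fun α _ => ?_); ring

lemma pd_pd_eq_fderiv2 {f : (Fin n → ℂ) → ℂ} {z : Fin n → ℂ}
    (h : DifferentiableAt ℂ (fun w => fderiv ℂ f w) z) (ε μ : Fin n) :
    pd ε (pd μ f) z
      = fderiv ℂ (fun w => fderiv ℂ f w) z (Pi.single ε 1) (Pi.single μ 1) := by
  have heq : pd μ f = fun w =>
      (ContinuousLinearMap.apply ℂ ℂ ((Pi.single μ 1 : Fin n → ℂ)))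
        ((fun w => fderiv ℂ f w) w) := rfl
  have hc := fderiv_comp (𝕜 := ℂ) z
    ((ContinuousLinearMap.apply ℂ ℂ ((Pi.single μ 1 : Fin n → ℂ))).differentiableAt) h
  show fderiv ℂ (pd μ f) z (Pi.single ε 1) = _
  rw [heq]
  rw [show (fun w => (ContinuousLinearMap.apply ℂ ℂ ((Pi.single μ 1 : Fin n → ℂ)))
      ((fun w => fderiv ℂ f w) w)) = (ContinuousLinearMap.apply ℂ ℂ
      ((Pi.single μ 1 : Fin n → ℂ))) ∘ (fun w => fderiv ℂ f w) from rfl, hc]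
  rw [ContinuousLinearMap.fderiv]
  rfl

/-- Clairaut / symmetry of second partial derivatives. -/
lemma pd_comm {U : Set (Fin n → ℂ)} (hU : IsOpen U) {f : (Fin n → ℂ) → ℂ}
    (hf : DifferentiableOn ℂ f U) {z : Fin n → ℂ} (hz : z ∈ U) (ε μ : Fin n) :
    pd ε (pd μ f) z = pd μ (pd ε f) z := by
  have hd := differentiableAt_fderiv hU hf hz
  have hsymm := second_derivative_symmetric_of_eventually (𝕜 := ℂ)
    (f := f) (f' := fun w => fderiv ℂ f w)
    (f'' := fderiv ℂ (fun w => fderiv ℂ f w) z)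
    ?_ hd.hasFDerivAt (Pi.single ε 1) (Pi.single μ 1)
  · rw [pd_pd_eq_fderiv2 hd, pd_pd_eq_fderiv2 hd, hsymm]
  · filter_upwards [hU.mem_nhds hz] with w hw
    exact (hf.differentiableAt (hU.mem_nhds hw)).hasFDerivAt

lemma differentiableAt_eulerOp {U : Set (Fin n → ℂ)} (hU : IsOpen U) {f : (Fin n → ℂ) → ℂ}
    (hf : DifferentiableOn ℂ f U) (d : Fin n → ℝ) {z : Fin n → ℂ} (hz : z ∈ U) :
    DifferentiableAt ℂ (eulerOp d f) z := by
  apply DifferentiableAt.fun_sum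
  intro α _
  exact (((differentiableAt_const _).mul (differentiableAt_apply (𝕜 := ℂ) α z)).mul
    (differentiableAt_pd hU hf α hz))

/-- Differentiating the Euler operator. -/
lemma pd_eulerOp {U : Set (Fin n → ℂ)} (hU : IsOpen U) {f : (Fin n → ℂ) → ℂ}
    (hf : DifferentiableOn ℂ f U) (d : Fin n → ℝ) {z : Fin n → ℂ} (hz : z ∈ U) (ε : Fin n) :
    pd ε (eulerOp d f) z = (d ε : ℂ) * pd ε f z + eulerOp d (pd ε f) z := by
  have hsum : HasFDerivAt (eulerOp d f)
      (∑ α, (((d α : ℂ) * z α) • fderiv ℂ (pd α f) z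
        + pd α f z • ((d α : ℂ) • (ContinuousLinearMap.proj α :
          (Fin n → ℂ) →L[ℂ] ℂ)))) z := by
    apply HasFDerivAt.fun_sum
    intro α _
    have g1 : HasFDerivAt (fun w : Fin n → ℂ => (d α : ℂ) * w α)
        ((d α : ℂ) • (ContinuousLinearMap.proj α : (Fin n → ℂ) →L[ℂ] ℂ)) z :=
      ((ContinuousLinearMap.proj α : (Fin n → ℂ) →L[ℂ] ℂ).hasFDerivAt).const_mul _
    have g2 : HasFDerivAt (pd α f) (fderiv ℂ (pd α f) z) z :=
      (differentiableAt_pd hU hf α hz).hasFDerivAt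
    exact g1.mul g2
  have hev := hsum.fderiv
  show fderiv ℂ (eulerOp d f) z (Pi.single ε 1) = _
  rw [hev]
  simp only [ContinuousLinearMap.sum_apply, ContinuousLinearMap.add_apply,
    ContinuousLinearMap.smul_apply, ContinuousLinearMap.proj_apply, smul_eq_mul]
  rw [Finset.sum_add_distrib]
  have h2 : ∑ α, pd α f z * ((d α : ℂ) * (Pi.single ε 1 : Fin n → ℂ) α)
      = (d ε : ℂ) * pd ε f z := by
    rw [Finset.sum_eq_single ε]
    · simp [mul_comm]
    · intro β _ hβ
      rw [Pi.single_eq_of_ne hβ]; ring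
    · simp
  have h1 : ∑ α, ((d α : ℂ) * z α) * fderiv ℂ (pd α f) z (Pi.single ε 1)
      = eulerOp d (pd ε f) z := by
    refine Finset.sum_congr rfl (fun α _ => ?_)
    have : fderiv ℂ (pd α f) z (Pi.single ε 1) = pd ε (pd α f) z := rfl
    rw [this, pd_comm hU hf hz ε α]
  rw [h1, h2, add_comm]

/-- A holomorphic function on a convex open set with vanishing partials is constant. -/
lemma eq_of_pd_eq_zero {U : Set (Fin n → ℂ)} (hU : IsOpen U) (hconv : Convex ℝ U)
    {f : (Fin n → ℂ) → ℂ} (hf : DifferentiableOn ℂ f U)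
    (hpd : ∀ α, ∀ z ∈ U, pd α f z = 0) {x y : Fin n → ℂ} (hx : x ∈ U) (hy : y ∈ U) :
    f x = f y := by
  apply hconv.is_const_of_fderivWithin_eq_zero hf ?_ hx hy
  intro z hz
  rw [fderivWithin_of_isOpen hU hz]
  ext v
  rw [ContinuousLinearMap.zero_apply, fderiv_apply_eq_sum]
  exact Finset.sum_eq_zero (fun α _ => by rw [hpd α z hz, mul_zero])

lemma pd_sub {f g : (Fin n → ℂ) → ℂ} {z : Fin n → ℂ} (hf : DifferentiableAt ℂ f z)
    (hg : DifferentiableAt ℂ g z) (α : Fin n) :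
    pd α (fun w => f w - g w) z = pd α f z - pd α g z := by
  show fderiv ℂ _ z _ = _
  rw [fderiv_fun_sub hf hg]; rfl

lemma pd_add {f g : (Fin n → ℂ) → ℂ} {z : Fin n → ℂ} (hf : DifferentiableAt ℂ f z)
    (hg : DifferentiableAt ℂ g z) (α : Fin n) :
    pd α (fun w => f w + g w) z = pd α f z + pd α g z := by
  show fderiv ℂ _ z _ = _
  rw [fderiv_fun_add hf hg]; rfl

lemma pd_const_mul {f : (Fin n → ℂ) → ℂ} {z : Fin n → ℂ} (hf : DifferentiableAt ℂ f z)
    (b : ℂ) (α : Fin n) :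
    pd α (fun w => b * f w) z = b * pd α f z := by
  show fderiv ℂ _ z _ = _
  rw [fderiv_const_mul hf b]; rfl

lemma pd_coord (i α : Fin n) (z : Fin n → ℂ) :
    pd α (fun w : Fin n → ℂ => w i) z = (Pi.single α 1 : Fin n → ℂ) i := by
  show fderiv ℂ (fun w : Fin n → ℂ => w i) z _ = _
  have h : fderiv ℂ (fun w : Fin n → ℂ => w i) z
      = (ContinuousLinearMap.proj i : (Fin n → ℂ) →L[ℂ] ℂ) :=
    (ContinuousLinearMap.proj i : (Fin n → ℂ) →L[ℂ] ℂ).fderiv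
  rw [h]; rfl

lemma pd_sq (i α : Fin n) (z : Fin n → ℂ) :
    pd α (fun w : Fin n → ℂ => w i * w i) z
      = 2 * z i * (Pi.single α 1 : Fin n → ℂ) i := by
  have h1 : HasFDerivAt (fun w : Fin n → ℂ => w i)
      (ContinuousLinearMap.proj i : (Fin n → ℂ) →L[ℂ] ℂ) z :=
    (ContinuousLinearMap.proj i : (Fin n → ℂ) →L[ℂ] ℂ).hasFDerivAt
  have h := (h1.fun_mul h1).fderiv
  show fderiv ℂ _ z _ = _
  rw [h]
  simp only [ContinuousLinearMap.add_apply, ContinuousLinearMap.smul_apply,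
    ContinuousLinearMap.proj_apply, smul_eq_mul]
  ring

lemma pd_linsum (a : Fin n → ℂ) (α : Fin n) (z : Fin n → ℂ) :
    pd α (fun w : Fin n → ℂ => ∑ μ, a μ * w μ) z = a α := by
  have h : HasFDerivAt (fun w : Fin n → ℂ => ∑ μ, a μ * w μ)
      (∑ μ, a μ • (ContinuousLinearMap.proj μ : (Fin n → ℂ) →L[ℂ] ℂ)) z := by
    apply HasFDerivAt.fun_sum
    intro μ _
    exact ((ContinuousLinearMap.proj μ : (Fin n → ℂ) →L[ℂ] ℂ).hasFDerivAt).const_mul _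
  show fderiv ℂ _ z _ = _
  rw [h.fderiv]
  simp only [ContinuousLinearMap.sum_apply, ContinuousLinearMap.smul_apply,
    ContinuousLinearMap.proj_apply, smul_eq_mul]
  rw [Finset.sum_eq_single α]
  · rw [Pi.single_eq_same, mul_one]
  · intro β _ hβ; rw [Pi.single_eq_of_ne hβ, mul_zero]
  · simp


end AuxiliaryLemmas

/-- Let `d(1) = 1` and `0 ≤ d(i) < 1` for `i ≠ 1`, and let `F` be holomorphic on
`Ω = {z ∈ ℂⁿ | Im z_n > 0}`.  If `E F = 2F` on `Ω` and `E(∂_ε ∂_μ F) = 0` on `Ω`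
for all `ε, μ`, where `E` is the weighted Euler operator, then `F = c·z₁²` for
some constant `c ∈ ℂ`. -/
theorem potential_unique_of_euler_conditions
    (n : ℕ) (hn : 2 ≤ n) (d : Fin n → ℝ)
    (hd1 : d ⟨0, by omega⟩ = 1)
    (hd : ∀ i : Fin n, i ≠ ⟨0, by omega⟩ → 0 ≤ d i ∧ d i < 1)
    (F : (Fin n → ℂ) → ℂ)
    (hF : DifferentiableOn ℂ F {z : Fin n → ℂ | 0 < (z ⟨n - 1, by omega⟩).im})
    (hEF : ∀ z ∈ {z : Fin n → ℂ | 0 < (z ⟨n - 1, by omega⟩).im},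
      eulerOp d F z = 2 * F z)
    (hE2 : ∀ ε μ : Fin n, ∀ z ∈ {z : Fin n → ℂ | 0 < (z ⟨n - 1, by omega⟩).im},
      eulerOp d (pd ε (pd μ F)) z = 0) :
    ∃ c : ℂ, ∀ z ∈ {z : Fin n → ℂ | 0 < (z ⟨n - 1, by omega⟩).im},
      F z = c * (z ⟨0, by omega⟩) ^ 2 := by
  have h0n : 0 < n := by omega
  have hNn : n - 1 < n := by omega
  set i0 : Fin n := ⟨0, h0n⟩ with hi0def
  set iN : Fin n := ⟨n - 1, hNn⟩ with hiNdef
  set Ω : Set (Fin n → ℂ) := {z : Fin n → ℂ | 0 < (z iN).im} with hΩdef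
  have hF' : DifferentiableOn ℂ F Ω := hF
  have hEF' : ∀ z ∈ Ω, eulerOp d F z = 2 * F z := hEF
  have hE2' : ∀ ε μ : Fin n, ∀ z ∈ Ω, eulerOp d (pd ε (pd μ F)) z = 0 := hE2
  have hd1' : d i0 = 1 := hd1
  have hd' : ∀ i : Fin n, i ≠ i0 → 0 ≤ d i ∧ d i < 1 := hd
  have hne : i0 ≠ iN := by
    intro h
    have h2 : (0 : ℕ) = n - 1 := congrArg Fin.val h
    omega
  have hΩo : IsOpen Ω := by
    have h : Ω = (fun z : Fin n → ℂ => (z iN).im) ⁻¹' (Ioi 0) := rfl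
    rw [h]
    exact (Complex.continuous_im.comp (continuous_apply iN)).isOpen_preimage _ isOpen_Ioi
  have hΩconv : Convex ℝ Ω := by
    have h : Ω = (Complex.imLm.comp (LinearMap.proj (R := ℝ) (φ := fun _ : Fin n => ℂ) iN))
        ⁻¹' (Ioi 0) := rfl
    rw [h]
    exact (convex_Ioi (0:ℝ)).linear_preimage _
  have hΩF : ∀ z ∈ Ω, DifferentiableAt ℂ F z := fun z hz =>
    hF'.differentiableAt (hΩo.mem_nhds hz)
  -- First differentiation of the Euler identity
  have D1 : ∀ μ : Fin n, ∀ z ∈ Ω,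
      (d μ : ℂ) * pd μ F z + eulerOp d (pd μ F) z = 2 * pd μ F z := by
    intro μ z hz
    have heq : eulerOp d F =ᶠ[𝓝 z] (fun w => 2 * F w) :=
      Filter.eventuallyEq_of_mem (hΩo.mem_nhds hz) (fun w hw => hEF' w hw)
    have h1 : pd μ (eulerOp d F) z = pd μ (fun w => 2 * F w) z := by
      show fderiv ℂ (eulerOp d F) z _ = fderiv ℂ (fun w => 2 * F w) z _
      rw [heq.fderiv_eq]
    have h2 : pd μ (fun w => 2 * F w) z = 2 * pd μ F z := pd_const_mul (hΩF z hz) 2 μ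
    rw [← pd_eulerOp hΩo hF' d hz μ, h1, h2]
  -- Second differentiation
  have D2 : ∀ ε μ : Fin n, ∀ z ∈ Ω,
      ((d ε : ℂ) + (d μ : ℂ)) * pd ε (pd μ F) z = 2 * pd ε (pd μ F) z := by
    intro ε μ z hz
    have hG : DifferentiableOn ℂ (pd μ F) Ω := differentiableOn_pd hΩo hF' μ
    have heq : (fun w => (d μ : ℂ) * pd μ F w + eulerOp d (pd μ F) w)
        =ᶠ[𝓝 z] (fun w => 2 * pd μ F w) :=
      Filter.eventuallyEq_of_mem (hΩo.mem_nhds hz) (fun w hw => D1 μ w hw)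
    have h1 : pd ε (fun w => (d μ : ℂ) * pd μ F w + eulerOp d (pd μ F) w) z
        = pd ε (fun w => 2 * pd μ F w) z := by
      show fderiv ℂ _ z _ = fderiv ℂ _ z _
      rw [heq.fderiv_eq]
    have hd1a : DifferentiableAt ℂ (fun w => (d μ : ℂ) * pd μ F w) z :=
      (differentiableAt_const _).mul (differentiableAt_pd hΩo hF' μ hz)
    have hd2a : DifferentiableAt ℂ (eulerOp d (pd μ F)) z :=
      differentiableAt_eulerOp hΩo hG d hz
    have h2 : pd ε (fun w => (d μ : ℂ) * pd μ F w + eulerOp d (pd μ F) w) z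
        = (d μ : ℂ) * pd ε (pd μ F) z
          + ((d ε : ℂ) * pd ε (pd μ F) z + eulerOp d (pd ε (pd μ F)) z) := by
      show fderiv ℂ _ z _ = _
      rw [fderiv_fun_add hd1a hd2a, ContinuousLinearMap.add_apply]
      congr 1
      · exact pd_const_mul (differentiableAt_pd hΩo hF' μ hz) _ ε
      · exact pd_eulerOp hΩo hG d hz ε
    have h3 : pd ε (fun w => 2 * pd μ F w) z = 2 * pd ε (pd μ F) z :=
      pd_const_mul (differentiableAt_pd hΩo hF' μ hz) 2 ε
    rw [h2, h3] at h1
    rw [hE2' ε μ z hz] at h1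
    linear_combination h1
  -- Vanishing of mixed second partials
  have D3 : ∀ ε μ : Fin n, ¬(ε = i0 ∧ μ = i0) → ∀ z ∈ Ω, pd ε (pd μ F) z = 0 := by
    intro ε μ hnm z hz
    have h := D2 ε μ z hz
    have hcoef : ((d ε : ℂ) + (d μ : ℂ) - 2) ≠ 0 := by
      have hle : ∀ β : Fin n, d β ≤ 1 := by
        intro β
        by_cases hβ : β = i0
        · rw [hβ, hd1']
        · exact (hd' β hβ).2.le
      have hlt : d ε + d μ < 2 := by
        by_cases h1 : ε = i0
        · have h2 : μ ≠ i0 := fun h2 => hnm ⟨h1, h2⟩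
          have := (hd' μ h2).2
          have := hle ε
          linarith
        · have := (hd' ε h1).2
          have := hle μ
          linarith
      intro hc
      have hc2 : ((d ε + d μ - 2 : ℝ) : ℂ) = 0 := by push_cast; linear_combination hc
      rw [Complex.ofReal_eq_zero] at hc2
      linarith
    have hz2 : ((d ε : ℂ) + (d μ : ℂ) - 2) * pd ε (pd μ F) z = 0 := by
      linear_combination h
    rcases mul_eq_zero.1 hz2 with h' | h'
    · exact absurd h' hcoef
    · exact h'
  -- The only surviving second derivative
  set H : (Fin n → ℂ) → ℂ := pd i0 (pd i0 F) with hHdef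
  have HdiffOn : DifferentiableOn ℂ H Ω :=
    differentiableOn_pd hΩo (differentiableOn_pd hΩo hF' i0) i0
  have GdiffOn : DifferentiableOn ℂ (pd i0 F) Ω := differentiableOn_pd hΩo hF' i0
  have D4 : ∀ α : Fin n, α ≠ i0 → ∀ z ∈ Ω, pd α H z = 0 := by
    intro α hα z hz
    have h1 : pd α H z = pd i0 (pd α (pd i0 F)) z := pd_comm hΩo GdiffOn hz α i0
    rw [h1]
    have heq : pd α (pd i0 F) =ᶠ[𝓝 z] (fun _ => (0:ℂ)) :=
      Filter.eventuallyEq_of_mem (hΩo.mem_nhds hz)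
        (fun w hw => D3 α i0 (fun hcon => hα hcon.1) w hw)
    show fderiv ℂ _ z _ = _
    rw [heq.fderiv_eq, fderiv_const_apply]
    rfl
  have hdi0 : (d i0 : ℂ) = 1 := by rw [hd1']; norm_num
  have D5 : ∀ z ∈ Ω, pd i0 H z = 0 := by
    intro z hz
    set ψ : ℂ → (Fin n → ℂ) := fun t => z + (t - z i0) • (Pi.single i0 1 : Fin n → ℂ) with hψdef
    have hψΩ : ∀ t, ψ t ∈ Ω := by
      intro t
      show 0 < ((z + (t - z i0) • (Pi.single i0 1 : Fin n → ℂ)) iN).im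
      have h : (z + (t - z i0) • (Pi.single i0 1 : Fin n → ℂ)) iN = z iN := by
        simp [Pi.single_eq_of_ne (Ne.symm hne)]
      rw [h]; exact hz
    have hψi0 : ∀ t, (ψ t) i0 = t := by
      intro t; simp [hψdef, Pi.single_eq_same]
    have hψz : ψ (z i0) = z := by simp [hψdef]
    have hkey : ∀ t : ℂ, t * pd i0 H (ψ t) = 0 := by
      intro t
      have he := hE2' i0 i0 (ψ t) (hψΩ t)
      have hsum : eulerOp d H (ψ t) = (d i0 : ℂ) * t * pd i0 H (ψ t) := by
        show ∑ α, (d α : ℂ) * (ψ t) α * pd α H (ψ t) = _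
        rw [Finset.sum_eq_single i0]
        · rw [hψi0]
        · intro β _ hβ; rw [D4 β hβ (ψ t) (hψΩ t), mul_zero]
        · simp
      rw [hsum, hdi0] at he
      linear_combination he
    by_cases h0 : z i0 = 0
    · set φ : ℂ → ℂ := fun t => pd i0 H (ψ t) with hφdef
      have hψ0 : ψ 0 = z := by rw [← h0]; exact hψz
      have hcont : ContinuousAt φ 0 := by
        have hc1 : ContinuousAt (pd i0 H) (ψ 0) :=
          (differentiableAt_pd hΩo HdiffOn i0 (hψΩ 0)).continuousAt
        have hc2 : Continuous ψ := by
          apply continuous_const.add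
          exact (continuous_id.sub continuous_const).smul continuous_const
        exact hc1.comp hc2.continuousAt
      have h1 : Tendsto φ (𝓝[≠] (0:ℂ)) (𝓝 (φ 0)) := hcont.continuousWithinAt
      have h2 : Tendsto φ (𝓝[≠] (0:ℂ)) (𝓝 0) := by
        refine Tendsto.congr' ?_ tendsto_const_nhds
        filter_upwards [self_mem_nhdsWithin] with t ht
        exact ((mul_eq_zero.1 (hkey t)).resolve_left ht).symm
      have h3 : φ 0 = 0 := tendsto_nhds_unique h1 h2
      rw [hφdef] at h3
      simpa [hψ0] using h3
    · have h := hkey (z i0)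
      rw [hψz] at h
      exact (mul_eq_zero.1 h).resolve_left h0
  -- base point
  set zs : Fin n → ℂ := Pi.single iN Complex.I with hzsdef
  have hzs : zs ∈ Ω := by
    show 0 < ((Pi.single iN Complex.I : Fin n → ℂ) iN).im
    rw [Pi.single_eq_same]
    simp
  have hzsi0 : zs i0 = 0 := Pi.single_eq_of_ne hne _
  set c2 : ℂ := H zs with hc2def
  have D6 : ∀ z ∈ Ω, H z = c2 := by
    intro z hz
    refine eq_of_pd_eq_zero hΩo hΩconv HdiffOn (fun α w hw => ?_) hz hzs
    by_cases hα : α = i0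
    · rw [hα]; exact D5 w hw
    · exact D4 α hα w hw
  set a : Fin n → ℂ := fun μ => pd μ F zs with hadef
  have D7 : ∀ μ : Fin n, ∀ z ∈ Ω,
      pd μ F z = a μ + c2 * z i0 * (Pi.single μ 1 : Fin n → ℂ) i0 := by
    intro μ z hz
    by_cases hμ : μ = i0
    · have hQd : DifferentiableOn ℂ (fun w => pd μ F w - c2 * w i0) Ω := by
        intro w hw
        exact ((differentiableAt_pd hΩo hF' μ hw).sub
          ((differentiableAt_const _).mul (differentiableAt_apply (𝕜 := ℂ) i0 w))
          ).differentiableWithinAt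
      have hQpd : ∀ α, ∀ w ∈ Ω, pd α (fun w => pd μ F w - c2 * w i0) w = 0 := by
        intro α w hw
        have hca : DifferentiableAt ℂ (fun w : Fin n → ℂ => c2 * w i0) w :=
          (differentiableAt_const _).mul (differentiableAt_apply (𝕜 := ℂ) i0 w)
        rw [pd_sub (differentiableAt_pd hΩo hF' μ hw) hca,
          pd_const_mul (differentiableAt_apply (𝕜 := ℂ) i0 w) c2, pd_coord]
        by_cases hα : α = i0
        · have h6 : pd α (pd μ F) w = c2 := by
            rw [hα, hμ]
            exact D6 w hw
          rw [h6, hα, Pi.single_eq_same]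
          ring
        · rw [D3 α μ (fun hcon => hα hcon.1) w hw, Pi.single_eq_of_ne (Ne.symm hα)]
          ring
      have hconst := eq_of_pd_eq_zero hΩo hΩconv hQd hQpd hz hzs
      rw [hzsi0, hμ] at hconst
      rw [hμ, Pi.single_eq_same]
      have h7 : a i0 = pd i0 F zs := rfl
      rw [h7]
      linear_combination hconst
    · have hpdc : ∀ α, ∀ w ∈ Ω, pd α (pd μ F) w = 0 :=
        fun α w hw => D3 α μ (fun hcon => hμ hcon.2) w hw
      have hconst := eq_of_pd_eq_zero hΩo hΩconv (differentiableOn_pd hΩo hF' μ)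
        hpdc hz hzs
      rw [Pi.single_eq_of_ne (Ne.symm hμ)]
      have : a μ = pd μ F zs := rfl
      rw [this]
      linear_combination hconst
  -- quadratic representation of F
  set b : ℂ := F zs - (c2/2 * (zs i0 * zs i0) + ∑ μ, a μ * zs μ) with hbdef
  have hPdiff : ∀ w : Fin n → ℂ, DifferentiableAt ℂ
      (fun w : Fin n → ℂ => c2/2 * (w i0 * w i0) + ∑ μ, a μ * w μ) w := by
    intro w
    apply DifferentiableAt.add
    · exact (differentiableAt_const _).mul
        ((differentiableAt_apply (𝕜 := ℂ) i0 w).mul (differentiableAt_apply (𝕜 := ℂ) i0 w))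
    · apply DifferentiableAt.fun_sum
      intro μ _
      exact (differentiableAt_const _).mul (differentiableAt_apply (𝕜 := ℂ) μ w)
  have D8 : ∀ z ∈ Ω, F z = c2/2 * (z i0 * z i0) + (∑ μ, a μ * z μ) + b := by
    intro z hz
    have hGd : DifferentiableOn ℂ
        (fun w => F w - (c2/2 * (w i0 * w i0) + ∑ μ, a μ * w μ)) Ω := by
      intro w hw
      exact ((hΩF w hw).sub (hPdiff w)).differentiableWithinAt
    have hGpd : ∀ α, ∀ w ∈ Ω,
        pd α (fun w => F w - (c2/2 * (w i0 * w i0) + ∑ μ, a μ * w μ)) w = 0 := by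
      intro α w hw
      rw [pd_sub (hΩF w hw) (hPdiff w)]
      have hq1 : DifferentiableAt ℂ (fun w : Fin n → ℂ => c2/2 * (w i0 * w i0)) w :=
        (differentiableAt_const _).mul
          ((differentiableAt_apply (𝕜 := ℂ) i0 w).mul (differentiableAt_apply (𝕜 := ℂ) i0 w))
      have hq2 : DifferentiableAt ℂ (fun w : Fin n → ℂ => ∑ μ, a μ * w μ) w := by
        apply DifferentiableAt.fun_sum
        intro μ _
        exact (differentiableAt_const _).mul (differentiableAt_apply (𝕜 := ℂ) μ w)
      have hp : pd α (fun w : Fin n → ℂ => c2/2 * (w i0 * w i0) + ∑ μ, a μ * w μ) w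
          = c2/2 * (2 * w i0 * (Pi.single α 1 : Fin n → ℂ) i0) + a α := by
        rw [pd_add hq1 hq2]
        congr 1
        · rw [pd_const_mul ((differentiableAt_apply (𝕜 := ℂ) i0 w).fun_mul
            (differentiableAt_apply (𝕜 := ℂ) i0 w)) (c2/2), pd_sq]
        · exact pd_linsum a α w
      rw [hp, D7 α w hw]
      ring
    have hconst := eq_of_pd_eq_zero hΩo hΩconv hGd hGpd hz hzs
    rw [hbdef]
    linear_combination hconst
  -- the linear identity on Ω
  have D9 : ∀ z ∈ Ω, ∑ μ, ((d μ : ℂ) - 2) * (a μ * z μ) = 2 * b := by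
    intro z hz
    have hEev : eulerOp d F z = (∑ μ, (d μ : ℂ) * (a μ * z μ)) + c2 * (z i0 * z i0) := by
      show ∑ μ, (d μ : ℂ) * z μ * pd μ F z = _
      have h1 : ∀ μ : Fin n, (d μ : ℂ) * z μ * pd μ F z
          = (d μ : ℂ) * (a μ * z μ)
            + (d μ : ℂ) * (c2 * z i0 * (Pi.single μ 1 : Fin n → ℂ) i0 * z μ) := by
        intro μ; rw [D7 μ z hz]; ring
      rw [Finset.sum_congr rfl (fun μ _ => h1 μ), Finset.sum_add_distrib]
      congr 1
      rw [Finset.sum_eq_single i0]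
      · rw [Pi.single_eq_same, hdi0]; ring
      · intro β _ hβ
        rw [Pi.single_eq_of_ne (Ne.symm hβ)]
        ring
      · simp
    have h := hEF' z hz
    rw [hEev, D8 z hz] at h
    have hexp : ∑ μ, ((d μ : ℂ) - 2) * (a μ * z μ)
        = (∑ μ, (d μ : ℂ) * (a μ * z μ)) - 2 * (∑ μ, a μ * z μ) := by
      rw [Finset.mul_sum, ← Finset.sum_sub_distrib]
      exact Finset.sum_congr rfl (fun μ _ => by ring)
    rw [hexp]
    linear_combination h
  have hdne2 : ∀ α : Fin n, ((d α : ℂ) - 2) ≠ 0 := by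
    intro α
    have hle : d α ≤ 1 := by
      by_cases hα : α = i0
      · rw [hα, hd1']
      · exact (hd' α hα).2.le
    intro hcon
    have h2 : ((d α - 2 : ℝ) : ℂ) = 0 := by push_cast; linear_combination hcon
    rw [Complex.ofReal_eq_zero] at h2
    linarith
  have heval : ∀ w : ℂ, 0 < w.im → ((d iN : ℂ) - 2) * (a iN * w) = 2 * b := by
    intro w hw
    have hzmem : (Pi.single iN w : Fin n → ℂ) ∈ Ω := by
      show 0 < ((Pi.single iN w : Fin n → ℂ) iN).im
      rw [Pi.single_eq_same]; exact hw
    have h := D9 _ hzmem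
    rw [Finset.sum_eq_single iN (fun β _ hβ => by
      rw [Pi.single_eq_of_ne hβ]; ring) (by simp)] at h
    rwa [Pi.single_eq_same] at h
  have haN : a iN = 0 := by
    have e1 := heval Complex.I (by simp)
    have e2 := heval (2*Complex.I) (by simp)
    have h3 : ((d iN : ℂ) - 2) * (a iN * Complex.I) = 0 := by linear_combination e2 - e1
    rcases mul_eq_zero.1 h3 with h' | h'
    · exact absurd h' (hdne2 iN)
    · rcases mul_eq_zero.1 h' with h'' | h''
      · exact h''
      · exact absurd h'' Complex.I_ne_zero
  have hb0 : b = 0 := by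
    have e1 := heval Complex.I (by simp)
    rw [haN] at e1
    have h0 : (2:ℂ) * b = 0 := by linear_combination -e1
    rcases mul_eq_zero.1 h0 with h' | h'
    · norm_num at h'
    · exact h'
  have ha : ∀ α, a α = 0 := by
    intro α
    by_cases hα : α = iN
    · rw [hα]; exact haN
    · have hzmem : (Pi.single iN Complex.I + Pi.single α 1 : Fin n → ℂ) ∈ Ω := by
        show 0 < ((Pi.single iN Complex.I + Pi.single α (1:ℂ) : Fin n → ℂ) iN).im
        rw [Pi.add_apply, Pi.single_eq_same, Pi.single_eq_of_ne (Ne.symm hα)]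
        simp
      have h := D9 _ hzmem
      have hsplit : ∑ μ, ((d μ : ℂ) - 2) * (a μ * (Pi.single iN Complex.I
          + Pi.single α (1:ℂ) : Fin n → ℂ) μ)
          = ((d iN : ℂ) - 2) * (a iN * Complex.I) + ((d α : ℂ) - 2) * a α := by
        have hterm : ∀ μ : Fin n, ((d μ:ℂ) - 2) * (a μ * (Pi.single iN Complex.I
            + Pi.single α (1:ℂ) : Fin n → ℂ) μ)
            = ((d μ:ℂ)-2) * (a μ * (Pi.single iN Complex.I : Fin n → ℂ) μ)
              + ((d μ:ℂ)-2) * (a μ * (Pi.single α (1:ℂ) : Fin n → ℂ) μ) := by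
          intro μ
          rw [Pi.add_apply]
          ring
        rw [Finset.sum_congr rfl (fun μ _ => hterm μ), Finset.sum_add_distrib]
        congr 1
        · rw [Finset.sum_eq_single iN (fun β _ hβ => by
            rw [Pi.single_eq_of_ne hβ]; ring) (by simp), Pi.single_eq_same]
        · rw [Finset.sum_eq_single α (fun β _ hβ => by
            rw [Pi.single_eq_of_ne hβ]; ring) (by simp), Pi.single_eq_same, mul_one]
      rw [hsplit, haN, hb0] at h
      have h4 : ((d α:ℂ)-2) * a α = 0 := by linear_combination h
      exact (mul_eq_zero.1 h4).resolve_left (hdne2 α)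
  refine ⟨c2/2, fun z hz => ?_⟩
  have h := D8 z hz
  rw [hb0] at h
  have hsum0 : ∑ μ, a μ * z μ = 0 := Finset.sum_eq_zero (fun μ _ => by rw [ha μ, zero_mul])
  rw [hsum0] at h
  show F z = c2/2 * (z i0)^2
  rw [h]
  ring
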